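/- If Σ is the all-negative signed complete graph K_n^- (n ≥ 2), then every k-positive function for Σ is injective; hence bdim(Σ) = sbdim(Σ). Moreover, any k-positive function yields an n-element NIP set in Ω^k, so by the bound that an NIP set in ℝ^k has at most k+1 elements, bdim(K_n^-) ≥ n − 1. -/

import Mathlib

open Finset

/-- The sign of a real number, as an integer. -/
noncomputable def sgnZ (x : ℝ) : ℤ := if 0 < x then 1 else if x < 0 then -1 else 0

/-- The standard inner product on `ℝ^k`. -/
def dotp {k : ℕ} (a b : Fin k → ℝ) : ℝ := ∑ i, a i * b i

/-- Membership in `Ω^k` where `Ω = {-1,0,1}`. -/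
def InOmega {k : ℕ} (a : Fin k → ℝ) : Prop := ∀ i, a i = -1 ∨ a i = 0 ∨ a i = 1

/-- `σ` is a sign function for the graph `G`: symmetric and `±1`-valued on edges,
so that `(G, σ)` is a signed graph. -/
def IsSignFn {V : Type*} (G : SimpleGraph V) (σ : V → V → ℤ) : Prop :=
  (∀ u v, σ u v = σ v u) ∧ ∀ u v, G.Adj u v → σ u v = 1 ∨ σ u v = -1

/-- `ζ : V → Ω^k` is a vector valued (`k`-)switching function for the signed graph:
`⟨ζ u, ζ v⟩ ≠ 0` for every edge `uv`. -/
def IsSwitching {V : Type*} (G : SimpleGraph V) {k : ℕ} (ζ : V → Fin k → ℝ) : Prop :=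
  (∀ v, InOmega (ζ v)) ∧ ∀ u v, G.Adj u v → dotp (ζ u) (ζ v) ≠ 0

/-- The sign function of the switched signed graph `Σ^ζ`:
`σ^ζ(uv) = σ(uv) · sgn ⟨ζ u, ζ v⟩`. -/
noncomputable def switchSign {V : Type*} (σ : V → V → ℤ) {k : ℕ} (ζ : V → Fin k → ℝ) : V → V → ℤ :=
  fun u v => σ u v * sgnZ (dotp (ζ u) (ζ v))

/-- `ζ : V → Ω^k` is a positive `k`-switching function (a `k`-positive function):
it switches `Σ` to the all positive signed graph. -/
def IsPositive {V : Type*} (G : SimpleGraph V) (σ : V → V → ℤ) {k : ℕ}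
    (ζ : V → Fin k → ℝ) : Prop :=
  (∀ v, InOmega (ζ v)) ∧ ∀ u v, G.Adj u v → switchSign σ ζ u v = 1

/-- The balancing dimension: the least `k ≥ 1` admitting a `k`-positive function. -/
noncomputable def bdim {V : Type*} (G : SimpleGraph V) (σ : V → V → ℤ) : ℕ :=
  sInf {k | 1 ≤ k ∧ ∃ ζ : V → Fin k → ℝ, IsPositive G σ ζ}

/-- The strong balancing dimension: the least `k ≥ 1` admitting an injective
`k`-positive function. -/
noncomputable def sbdim {V : Type*} (G : SimpleGraph V) (σ : V → V → ℤ) : ℕ :=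
  sInf {k | 1 ≤ k ∧ ∃ ζ : V → Fin k → ℝ, Function.Injective ζ ∧ IsPositive G σ ζ}

/- ### Auxiliary lemmas -/

lemma dotp_eq_inner' {k : ℕ} (a b : Fin k → ℝ) :
    dotp a b = inner ℝ (WithLp.toLp 2 a : EuclideanSpace ℝ (Fin k)) (WithLp.toLp 2 b) := by
  simp [dotp, PiLp.inner_apply, RCLike.inner_apply, mul_comm]

/-- An NIP family in `ℝ^k` (with an extra vector having negative inner product with all
members) has at most `k` elements. -/
lemma nip_li {k : ℕ} {ι : Type*} [Fintype ι]
    (w : ι → EuclideanSpace ℝ (Fin k)) (v₀ : EuclideanSpace ℝ (Fin k))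
    (h : ∀ i j, i ≠ j → inner ℝ (w i) (w j) < (0:ℝ))
    (h0 : ∀ i, inner ℝ (w i) v₀ < (0:ℝ)) :
    Fintype.card ι ≤ k := by
  classical
  have li : LinearIndependent ℝ w := by
    rw [Fintype.linearIndependent_iff]
    intro g hg
    set P := univ.filter (fun i => 0 < g i) with hP
    set N := univ.filter (fun i => g i < 0) with hN
    set u := ∑ i ∈ P, g i • w i with hu
    set z := ∑ i ∈ N, (-g i) • w i with hz
    have hdisj : Disjoint P N := by
      simp only [Finset.disjoint_left, hP, hN, mem_filter, mem_univ, true_and]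
      intro a h1 h2; linarith
    have huz : u = z := by
      have h1 : u - z = ∑ i ∈ P ∪ N, g i • w i := by
        rw [Finset.sum_union hdisj, hu, hz]
        simp [neg_smul, sub_eq_add_neg]
      have h2 : ∑ i ∈ P ∪ N, g i • w i = ∑ i, g i • w i := by
        apply Finset.sum_subset (subset_univ _)
        intro x _ hx
        simp only [hP, hN, mem_union, mem_filter, mem_univ, true_and, not_or, not_lt] at hx
        have : g x = 0 := le_antisymm hx.1 hx.2
        simp [this]
      rw [hg] at h2
      exact sub_eq_zero.mp (h1.trans h2)
    have hinner : inner ℝ u z = ∑ i ∈ P, ∑ j ∈ N, (g i * (-g j)) * inner ℝ (w i) (w j) := by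
      rw [hu, hz, sum_inner]
      refine Finset.sum_congr rfl fun i hi => ?_
      rw [inner_sum]
      refine Finset.sum_congr rfl fun j hj => ?_
      rw [real_inner_smul_left, real_inner_smul_right]
      ring
    have hnz : inner ℝ u z ≤ (0:ℝ) := by
      rw [hinner]
      apply Finset.sum_nonpos
      intro i hi
      apply Finset.sum_nonpos
      intro j hj
      have hij : i ≠ j := fun e => Finset.disjoint_left.mp hdisj hi (e ▸ hj)
      have hgi : 0 < g i := (mem_filter.mp hi).2
      have hgj : g j < 0 := (mem_filter.mp hj).2
      have := h i j hij
      exact mul_nonpos_of_nonneg_of_nonpos (by nlinarith) this.le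
    have hu0 : u = 0 := by
      have hle : inner ℝ u u ≤ (0:ℝ) := by rw [huz]; rw [huz] at hnz; exact hnz
      have h2 : inner ℝ u u = (0:ℝ) := le_antisymm hle real_inner_self_nonneg
      exact inner_self_eq_zero.mp h2
    have hz0 : z = 0 := huz ▸ hu0
    have hPempty : P = ∅ := by
      by_contra hne
      have hne' : P.Nonempty := Finset.nonempty_of_ne_empty hne
      have : inner ℝ u v₀ = ∑ i ∈ P, g i * inner ℝ (w i) v₀ := by
        rw [hu, sum_inner]
        exact Finset.sum_congr rfl fun i _ => real_inner_smul_left _ _ _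
      rw [hu0, inner_zero_left] at this
      have hlt : ∑ i ∈ P, g i * inner ℝ (w i) v₀ < 0 := by
        apply sum_neg (fun i hi => ?_) hne'
        exact mul_neg_of_pos_of_neg (mem_filter.mp hi).2 (h0 i)
      linarith [this ▸ hlt]
    have hNempty : N = ∅ := by
      by_contra hne
      have hne' : N.Nonempty := Finset.nonempty_of_ne_empty hne
      have : inner ℝ z v₀ = ∑ i ∈ N, (-g i) * inner ℝ (w i) v₀ := by
        rw [hz, sum_inner]
        exact Finset.sum_congr rfl fun i _ => real_inner_smul_left _ _ _
      rw [hz0, inner_zero_left] at this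
      have hlt : ∑ i ∈ N, (-g i) * inner ℝ (w i) v₀ < 0 := by
        apply sum_neg (fun i hi => ?_) hne'
        have : g i < 0 := (mem_filter.mp hi).2
        exact mul_neg_of_pos_of_neg (by linarith) (h0 i)
      linarith [this ▸ hlt]
    intro i
    by_contra hgi
    rcases lt_or_gt_of_ne hgi with hlt | hgt
    · have : i ∈ N := mem_filter.mpr ⟨mem_univ _, hlt⟩
      simp [hNempty] at this
    · have : i ∈ P := mem_filter.mpr ⟨mem_univ _, hgt⟩
      simp [hPempty] at this
  calc Fintype.card ι ≤ Module.finrank ℝ (EuclideanSpace ℝ (Fin k)) :=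
        li.fintype_card_le_finrank
    _ = k := finrank_euclideanSpace_fin

/-- Witness vectors with pairwise negative inner products. -/
def fwit {V : Type*} [DecidableEq V] (w : V) (p : V × V) : ℝ :=
  (if w = p.1 then 1 else 0) - (if w = p.2 then 1 else 0)

lemma fwit_dot {V : Type*} [Fintype V] [DecidableEq V] (a b : V) (hab : a ≠ b) :
    ∑ p : V × V, fwit a p * fwit b p = -2 := by
  simp only [fwit, Fintype.sum_prod_type]
  simp only [sub_mul, mul_sub, ite_mul, mul_ite, one_mul, mul_one, zero_mul, mul_zero]
  simp [Finset.sum_ite_eq, Finset.sum_ite_eq', Finset.sum_sub_distrib, hab, hab.symm]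
  norm_num

/-- For the all-negative complete graph `Kₙ⁻` (`n ≥ 2`): every `k`-positive function is
injective and its values form an `n`-element NIP set (pairwise negative inner products);
hence `bdim = sbdim`, and since an NIP set in `ℝ^k` has at most `k+1` elements,
`bdim(Kₙ⁻) ≥ n − 1`. -/
theorem all_negative_complete {V : Type*} [Fintype V] [DecidableEq V]
    (n : ℕ) (hn : 2 ≤ n) (hcard : Fintype.card V = n) :
    (∀ (k : ℕ) (ζ : V → Fin k → ℝ),
      IsPositive (⊤ : SimpleGraph V) (fun _ _ => (-1 : ℤ)) ζ →
        Function.Injective ζ ∧ ∀ u v : V, u ≠ v → dotp (ζ u) (ζ v) < 0) ∧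
    bdim (⊤ : SimpleGraph V) (fun _ _ => (-1 : ℤ)) =
      sbdim (⊤ : SimpleGraph V) (fun _ _ => (-1 : ℤ)) ∧
    n - 1 ≤ bdim (⊤ : SimpleGraph V) (fun _ _ => (-1 : ℤ)) := by
  classical
  -- Part 1
  have part1 : ∀ (k : ℕ) (ζ : V → Fin k → ℝ),
      IsPositive (⊤ : SimpleGraph V) (fun _ _ => (-1 : ℤ)) ζ →
        Function.Injective ζ ∧ ∀ u v : V, u ≠ v → dotp (ζ u) (ζ v) < 0 := by
    intro k ζ hpos
    have hneg : ∀ u v : V, u ≠ v → dotp (ζ u) (ζ v) < 0 := by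
      intro u v huv
      have hadj : (⊤ : SimpleGraph V).Adj u v := by simpa using huv
      have := hpos.2 u v hadj
      simp only [switchSign, neg_one_mul, neg_eq_iff_eq_neg] at this
      unfold sgnZ at this
      by_contra hge
      push_neg at hge
      rcases eq_or_lt_of_le hge with heq | hlt
      · simp [← heq] at this
      · simp [hlt, not_lt.mpr hlt.le] at this
    refine ⟨?_, hneg⟩
    intro u v huv
    by_contra hne
    have := hneg u v hne
    rw [huv] at this
    have hnn : 0 ≤ dotp (ζ v) (ζ v) :=
      Finset.sum_nonneg fun i _ => mul_self_nonneg _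
    linarith
  refine ⟨part1, ?_, ?_⟩
  · -- bdim = sbdim
    unfold bdim sbdim
    congr 1
    ext k
    constructor
    · rintro ⟨hk, ζ, hζ⟩
      exact ⟨hk, ζ, (part1 k ζ hζ).1, hζ⟩
    · rintro ⟨hk, ζ, _, hζ⟩
      exact ⟨hk, ζ, hζ⟩
  · -- n - 1 ≤ bdim
    set S := {k | 1 ≤ k ∧ ∃ ζ : V → Fin k → ℝ,
        IsPositive (⊤ : SimpleGraph V) (fun _ _ => (-1 : ℤ)) ζ} with hS
    have hV : 0 < Fintype.card V := by omega
    have hne : Nonempty V := Fintype.card_pos_iff.mp hV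
    obtain ⟨v₀⟩ := hne
    -- S is nonempty: witness in dimension card (V × V)
    have hSne : S.Nonempty := by
      set m := Fintype.card (V × V) with hm
      set e := (Fintype.equivFin (V × V)).symm with he
      refine ⟨m, ?_, fun v i => fwit v (e i), ?_, ?_⟩
      · have : Fintype.card (V × V) = n * n := by simp [Fintype.card_prod, hcard]
        have : 4 ≤ m := by rw [hm, this]; nlinarith
        omega
      · intro v i
        dsimp only
        unfold fwit
        split <;> split <;> norm_num
      · intro u v hadj
        have huv : u ≠ v := by simpa using hadj
        have hdot : dotp (fun i => fwit u (e i)) (fun i => fwit v (e i)) = -2 := by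
          rw [dotp, Equiv.sum_comp e (fun p => fwit u p * fwit v p)]
          exact fwit_dot u v huv
        simp [switchSign, hdot, sgnZ]
        rw [hdot]; norm_num
    set k := bdim (⊤ : SimpleGraph V) (fun _ _ => (-1 : ℤ)) with hkdef
    have hmem : k ∈ S := Nat.sInf_mem hSne
    obtain ⟨hk1, ζ, hζ⟩ := hmem
    obtain ⟨hinj, hneg⟩ := part1 k ζ hζ
    -- apply the NIP bound to the family indexed by {v // v ≠ v₀}
    have hcard' : Fintype.card {v : V // v ≠ v₀} = n - 1 := by
      have := Fintype.card_subtype_compl (fun v : V => v = v₀) (α := V)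
      rw [Fintype.card_subtype_eq, hcard] at this
      exact this
    have hle : Fintype.card {v : V // v ≠ v₀} ≤ k := by
      apply nip_li (fun i : {v : V // v ≠ v₀} => (WithLp.toLp 2 (ζ i.1) : EuclideanSpace ℝ (Fin k))) (WithLp.toLp 2 (ζ v₀))
      · intro i j hij
        have : (i : V) ≠ (j : V) := fun h => hij (Subtype.ext h)
        rw [← dotp_eq_inner']
        exact hneg _ _ this
      · intro i
        rw [← dotp_eq_inner']
        exact hneg _ _ i.2
    omega
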